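/- Fix an even integer κ ≥ 6. There exists a strictly increasing sequence (F_n)_{n≥1} of real numbers such that: (i) cos(π/κ)·cos(2π/κ) < F_n < cos(2π/κ) for every n ≥ 1; (ii) F_n → cos(2π/κ) as n → ∞; and (iii) for every n ≥ 1, both F_{2n−1} and F_{2n} belong to 𝚯_{n,κ} (dimension 2). -/

import Mathlib

open Real Filter

/-- Chebyshev polynomial of the first kind, as a real function. -/
noncomputable def chebT (n : ℕ) (x : ℝ) : ℝ := (Polynomial.Chebyshev.T ℝ n).eval x

/-- Chebyshev polynomial of the second kind, as a real function. -/
noncomputable def chebU (n : ℕ) (x : ℝ) : ℝ := (Polynomial.Chebyshev.U ℝ n).eval x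

/-- The function `g_{jκ}^E(x) = (E/x)(1-x²)U_{jκ-1}(x) + x(1-(E/x)²)U_{jκ-1}(E/x)`. -/
noncomputable def g (j κ : ℕ) (E x : ℝ) : ℝ :=
  (E / x) * (1 - x ^ 2) * chebU (j * κ - 1) x + x * (1 - (E / x) ^ 2) * chebU (j * κ - 1) (E / x)

/-- `E ∈ 𝚯_{m,κ}` (dimension 2). -/
def Theta2 (m κ : ℕ) (E : ℝ) : Prop :=
  ∃ x : ℕ → ℝ, ∃ ω : ℕ → ℝ,
    (∀ q ≤ m, x q ≠ 0 ∧ |x q| ≤ 1 ∧ |E / x q| ≤ 1) ∧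
    (∀ q < m, ω q ≤ 0) ∧
    (∀ j : ℕ, 1 ≤ j → g j κ E (x m) = ∑ q ∈ Finset.range m, ω q * g j κ E (x q))

namespace IST
open Set Topology

lemma one_sub_sq_chebU (m : ℕ) (t : ℝ) :
    (1 - Real.cos t ^ 2) * chebU m (Real.cos t) = Real.sin t * Real.sin ((m + 1 : ℕ) * t) := by
  have h := Polynomial.Chebyshev.U_real_cos t (m : ℤ)
  have h2 : ((m : ℤ) + 1 : ℝ) = ((m + 1 : ℕ) : ℝ) := by push_cast; ring
  rw [chebU]
  have hs : (1 : ℝ) - Real.cos t ^ 2 = Real.sin t ^ 2 := by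
    have := Real.sin_sq_add_cos_sq t; linarith
  rw [hs]
  have : Real.sin t ^ 2 * (Polynomial.Chebyshev.U ℝ (m : ℤ)).eval (Real.cos t)
      = Real.sin t * ((Polynomial.Chebyshev.U ℝ (m : ℤ)).eval (Real.cos t) * Real.sin t) := by
    ring
  rw [this, h]
  push_cast
  ring_nf

lemma g_eval {j κ : ℕ} (hj : 1 ≤ j) (hκ : 1 ≤ κ) (a b E : ℝ) (hcos : Real.cos a ≠ 0)
    (hE : Real.cos a * Real.cos b = E) :
    g j κ E (Real.cos a)
      = Real.cos b * Real.sin a * Real.sin ((j * κ : ℕ) * a)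
        + Real.cos a * Real.sin b * Real.sin ((j * κ : ℕ) * b) := by
  have hdiv : E / Real.cos a = Real.cos b := by
    field_simp [hcos] at *; linarith [hE]
  have hm : (j * κ - 1 + 1 : ℕ) = j * κ := Nat.sub_add_cancel (Nat.one_le_iff_ne_zero.2 (by positivity))
  rw [g, hdiv]
  rw [mul_assoc (Real.cos b), one_sub_sq_chebU (j * κ - 1) a,
    mul_assoc (Real.cos a), one_sub_sq_chebU (j * κ - 1) b, hm]
  ring

end IST
namespace IST
open Set Topology

noncomputable def cc (κ : ℕ) : ℝ := 2 * π / κ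
noncomputable def hh (κ : ℕ) : ℝ := π / κ
noncomputable def LL (κ : ℕ) : ℝ := Real.cos (hh κ) * Real.cos (cc κ)
noncomputable def RR (κ : ℕ) : ℝ := Real.cos (cc κ)

variable {κ : ℕ}

lemma kpos (hκ : 6 ≤ κ) : (0:ℝ) < κ := by positivity

lemma h_pos (hκ : 6 ≤ κ) : 0 < hh κ := by
  have := kpos hκ; exact div_pos pi_pos this

lemma c_eq (hκ : 6 ≤ κ) : cc κ = 2 * hh κ := by rw [cc, hh]; ring

lemma c_pos (hκ : 6 ≤ κ) : 0 < cc κ := by rw [c_eq hκ]; linarith [h_pos hκ]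

lemma h_le (hκ : 6 ≤ κ) : hh κ ≤ π / 6 := by
  rw [hh]
  have h6 : (6:ℝ) ≤ κ := by exact_mod_cast hκ
  have := kpos hκ
  rw [div_le_div_iff₀ this (by norm_num)]
  nlinarith [pi_pos]

lemma c_le (hκ : 6 ≤ κ) : cc κ ≤ π / 3 := by
  rw [c_eq hκ]; linarith [h_le hκ]

lemma h_lt_c (hκ : 6 ≤ κ) : hh κ < cc κ := by
  rw [c_eq hκ]; linarith [h_pos hκ]

lemma c_lt_pi_div_two (hκ : 6 ≤ κ) : cc κ < π / 2 := by
  have := c_le hκ; have := pi_pos; linarith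

lemma c_le_pi (hκ : 6 ≤ κ) : cc κ ≤ π := by
  have := c_lt_pi_div_two hκ; have := pi_pos; linarith

lemma h_lt_pi_div_two (hκ : 6 ≤ κ) : hh κ < π / 2 := by
  have := h_lt_c hκ; have := c_lt_pi_div_two hκ; linarith

lemma cosc_pos (hκ : 6 ≤ κ) : 0 < Real.cos (cc κ) :=
  Real.cos_pos_of_mem_Ioo ⟨by linarith [c_pos hκ, pi_pos], c_lt_pi_div_two hκ⟩

lemma cosh_pos (hκ : 6 ≤ κ) : 0 < Real.cos (hh κ) :=
  Real.cos_pos_of_mem_Ioo ⟨by linarith [h_pos hκ, pi_pos], h_lt_pi_div_two hκ⟩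

lemma cosh_lt_one (hκ : 6 ≤ κ) : Real.cos (hh κ) < 1 := by
  have := Real.cos_lt_cos_of_nonneg_of_le_pi (le_refl 0)
    (by linarith [h_lt_pi_div_two hκ, pi_pos] : hh κ ≤ π) (h_pos hκ)
  simpa using this

lemma R_lt_one (hκ : 6 ≤ κ) : RR κ < 1 := by
  have := Real.cos_lt_cos_of_nonneg_of_le_pi (le_refl 0) (c_le_pi hκ) (c_pos hκ)
  simpa [RR] using this

lemma L_pos (hκ : 6 ≤ κ) : 0 < LL κ := mul_pos (cosh_pos hκ) (cosc_pos hκ)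

lemma L_lt_R (hκ : 6 ≤ κ) : LL κ < RR κ := by
  rw [LL, RR]
  nlinarith [cosh_lt_one hκ, cosc_pos hκ]

lemma R_lt_cossq (hκ : 6 ≤ κ) : RR κ < Real.cos (hh κ) ^ 2 := by
  have h2 : Real.cos (cc κ) = 2 * Real.cos (hh κ) ^ 2 - 1 := by
    rw [c_eq hκ]; exact Real.cos_two_mul _
  rw [RR, h2]
  nlinarith [cosh_lt_one hκ, cosh_pos hκ]

lemma kh (hκ : 6 ≤ κ) : (κ:ℝ) * hh κ = π := by
  rw [hh]; field_simp

lemma kc (hκ : 6 ≤ κ) : (κ:ℝ) * cc κ = 2 * π := by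
  rw [cc]; field_simp

lemma c_sub_h (hκ : 6 ≤ κ) : cc κ - hh κ = hh κ := by rw [c_eq hκ]; ring

/-- helper: `arccos x < t ↔ cos t < x`. -/
lemma arccos_lt_iff {x t : ℝ} (hx1 : -1 ≤ x) (hx2 : x ≤ 1) (ht0 : 0 ≤ t) (htpi : t ≤ π) :
    Real.arccos x < t ↔ Real.cos t < x := by
  constructor
  · intro h
    have := Real.cos_lt_cos_of_nonneg_of_le_pi (Real.arccos_nonneg x) htpi h
    rwa [Real.cos_arccos hx1 hx2] at this
  · intro h
    by_contra hc
    push_neg at hc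
    have := Real.cos_le_cos_of_nonneg_of_le_pi ht0 (Real.arccos_le_pi x) hc
    rw [Real.cos_arccos hx1 hx2] at this
    linarith

lemma lt_arccos_iff {x t : ℝ} (hx1 : -1 ≤ x) (hx2 : x ≤ 1) (ht0 : 0 ≤ t) (htpi : t ≤ π) :
    t < Real.arccos x ↔ x < Real.cos t := by
  constructor
  · intro h
    have := Real.cos_lt_cos_of_nonneg_of_le_pi ht0 (Real.arccos_le_pi x) h
    rwa [Real.cos_arccos hx1 hx2] at this
  · intro h
    by_contra hc
    push_neg at hc
    have := Real.cos_le_cos_of_nonneg_of_le_pi (Real.arccos_nonneg x) htpi hc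
    rw [Real.cos_arccos hx1 hx2] at this
    linarith

lemma arccos_le_arccos' {x y : ℝ} (hx : -1 ≤ x) (hxy : x ≤ y) :
    Real.arccos y ≤ Real.arccos x := by
  unfold Real.arccos
  have := Real.monotone_arcsin hxy
  linarith


lemma arccos_lt_arccos'' {x y : ℝ} (hx : -1 ≤ x) (hxy : x < y) (hy : y ≤ 1) :
    Real.arccos y < Real.arccos x := by
  have h := (arccos_lt_iff (x := y) (t := Real.arccos x) (by linarith) hy
      (Real.arccos_nonneg x) (Real.arccos_le_pi x))
  exact h.2 (by rwa [Real.cos_arccos hx (by linarith)])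

noncomputable def chn (κ : ℕ) (E : ℝ) : ℕ → ℝ
  | 0 => Real.arccos (E / Real.cos (cc κ))
  | q + 1 => Real.arccos (E / Real.cos (cc κ - chn κ E q))

lemma chn_zero (κ : ℕ) (E : ℝ) : chn κ E 0 = Real.arccos (E / Real.cos (cc κ)) := rfl
lemma chn_succ (κ : ℕ) (E : ℝ) (q : ℕ) :
    chn κ E (q + 1) = Real.arccos (E / Real.cos (cc κ - chn κ E q)) := rfl

section Inv
variable {κ : ℕ} {E : ℝ}

lemma E_pos (hκ : 6 ≤ κ) (hE : E ∈ Ioo (LL κ) (RR κ)) : 0 < E := lt_trans (L_pos hκ) hE.1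
lemma E_lt_one (hκ : 6 ≤ κ) (hE : E ∈ Ioo (LL κ) (RR κ)) : E < 1 := lt_trans hE.2 (R_lt_one hκ)

lemma denom_gt (hκ : 6 ≤ κ) (hE : E ∈ Ioo (LL κ) (RR κ)) {u : ℝ}
    (h0 : 0 < u) (hB : u ≤ Real.arccos E) : E < Real.cos (cc κ - u) := by
  obtain ⟨hL, hR⟩ := hE
  have hE0 : 0 < E := lt_trans (L_pos hκ) hL
  have hE1 : E < 1 := lt_trans hR (R_lt_one hκ)
  rcases le_or_gt u (cc κ) with hu | hu
  · have h1 : Real.cos (cc κ) ≤ Real.cos (cc κ - u) :=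
      Real.cos_le_cos_of_nonneg_of_le_pi (by linarith) (c_le_pi hκ) (by linarith)
    exact lt_of_lt_of_le hR h1
  · have hcos : Real.cos (cc κ - u) = Real.cos (u - cc κ) := by
      rw [← Real.cos_neg]; ring_nf
    rw [hcos]
    have hlt : u - cc κ < Real.arccos E := by
      have := c_pos hκ; linarith
    have := Real.cos_lt_cos_of_nonneg_of_le_pi (by linarith : (0:ℝ) ≤ u - cc κ)
      (Real.arccos_le_pi E) hlt
    rwa [Real.cos_arccos (by linarith) hE1.le] at this

lemma inv (hκ : 6 ≤ κ) (hE : E ∈ Ioo (LL κ) (RR κ)) :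
    ∀ q, 0 < chn κ E q ∧ chn κ E q ≤ Real.arccos E := by
  have hE0 : 0 < E := E_pos hκ hE
  have hE1 : E < 1 := E_lt_one hκ hE
  have hcosc := cosc_pos hκ
  intro q
  induction q with
  | zero =>
    have hr1 : E / Real.cos (cc κ) < 1 := (div_lt_one hcosc).2 hE.2
    have hrE : E ≤ E / Real.cos (cc κ) := by
      rw [le_div_iff₀ hcosc]
      nlinarith [Real.cos_le_one (cc κ)]
    exact ⟨Real.arccos_pos.2 hr1, arccos_le_arccos' (by linarith) hrE⟩
  | succ q ih =>
    have hden : E < Real.cos (cc κ - chn κ E q) := denom_gt hκ hE ih.1 ih.2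
    have hdpos : 0 < Real.cos (cc κ - chn κ E q) := lt_trans hE0 hden
    have hr1 : E / Real.cos (cc κ - chn κ E q) < 1 := (div_lt_one hdpos).2 hden
    have hrE : E ≤ E / Real.cos (cc κ - chn κ E q) := by
      rw [le_div_iff₀ hdpos]
      nlinarith [Real.cos_le_one (cc κ - chn κ E q)]
    rw [chn_succ]
    exact ⟨Real.arccos_pos.2 hr1, arccos_le_arccos' (by linarith) hrE⟩

lemma chn_pos (hκ : 6 ≤ κ) (hE : E ∈ Ioo (LL κ) (RR κ)) (q : ℕ) : 0 < chn κ E q :=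
  (inv hκ hE q).1

lemma denom_pos (hκ : 6 ≤ κ) (hE : E ∈ Ioo (LL κ) (RR κ)) (q : ℕ) :
    E < Real.cos (cc κ - chn κ E q) := denom_gt hκ hE (inv hκ hE q).1 (inv hκ hE q).2

lemma chn_lt_half_pi (hκ : 6 ≤ κ) (hE : E ∈ Ioo (LL κ) (RR κ)) (q : ℕ) :
    chn κ E q < π / 2 :=
  lt_of_le_of_lt (inv hκ hE q).2 (Real.arccos_lt_pi_div_two.2 (E_pos hκ hE))

lemma chn_ratio_lt_one (hκ : 6 ≤ κ) (hE : E ∈ Ioo (LL κ) (RR κ)) (q : ℕ) :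
    E / Real.cos (cc κ - chn κ E q) < 1 :=
  (div_lt_one (lt_trans (E_pos hκ hE) (denom_pos hκ hE q))).2 (denom_pos hκ hE q)

lemma chainEq (hκ : 6 ≤ κ) (hE : E ∈ Ioo (LL κ) (RR κ)) (q : ℕ) :
    Real.cos (cc κ - chn κ E q) * Real.cos (chn κ E (q + 1)) = E := by
  have hE0 := E_pos hκ hE
  have hdpos : 0 < Real.cos (cc κ - chn κ E q) := lt_trans (E_pos hκ hE) (denom_pos hκ hE q)
  have hm1 : (-1:ℝ) ≤ E / Real.cos (cc κ - chn κ E q) := by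
    have := div_nonneg hE0.le hdpos.le; linarith
  rw [chn_succ, Real.cos_arccos hm1 (chn_ratio_lt_one hκ hE q).le]
  field_simp

lemma u0Eq (hκ : 6 ≤ κ) (hE : E ∈ Ioo (LL κ) (RR κ)) :
    Real.cos (chn κ E 0) * Real.cos (cc κ) = E := by
  have hcosc := cosc_pos hκ
  have hE0 := E_pos hκ hE
  have h0 : (0:ℝ) ≤ E / Real.cos (cc κ) := div_nonneg hE0.le hcosc.le
  rw [chn_zero, Real.cos_arccos (by linarith) ((div_lt_one hcosc).2 hE.2).le]
  field_simp

lemma u0_lt_h (hκ : 6 ≤ κ) (hE : E ∈ Ioo (LL κ) (RR κ)) : chn κ E 0 < hh κ := by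
  have hcosc := cosc_pos hκ
  have hE0 := E_pos hκ hE
  have hm1 : (-1:ℝ) ≤ E / Real.cos (cc κ) := by
    have := div_nonneg hE0.le hcosc.le; linarith
  rw [chn_zero]
  rw [arccos_lt_iff hm1 ((div_lt_one hcosc).2 hE.2).le (h_pos hκ).le
      (by linarith [h_lt_pi_div_two hκ, pi_pos] : hh κ ≤ π)]
  rw [lt_div_iff₀ hcosc]
  exact hE.1

lemma Fh_gt (hκ : 6 ≤ κ) (hE : E ∈ Ioo (LL κ) (RR κ)) {q : ℕ} (hq : chn κ E q = hh κ) :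
    hh κ < chn κ E (q + 1) := by
  have hcosh := cosh_pos hκ
  have hr : E / Real.cos (cc κ - chn κ E q) = E / Real.cos (hh κ) := by
    rw [hq, c_sub_h hκ]
  have hE0 := E_pos hκ hE
  have hm1 : (-1:ℝ) ≤ E / Real.cos (hh κ) := by
    have := div_nonneg hE0.le hcosh.le; linarith
  rw [chn_succ, hr]
  rw [lt_arccos_iff hm1
      (by rw [div_le_one hcosh]; nlinarith [R_lt_cossq hκ, hE.2, cosh_lt_one hκ, cosh_pos hκ])
      (h_pos hκ).le (by linarith [h_lt_pi_div_two hκ, pi_pos] : hh κ ≤ π)]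
  rw [div_lt_iff₀ hcosh]
  have := R_lt_cossq hκ
  nlinarith [hE.2]


lemma escape (hκ : 6 ≤ κ) (hE : E ∈ Ioo (LL κ) (RR κ)) : ∃ q, hh κ ≤ chn κ E q := by
  by_contra hc
  push_neg at hc
  have hE0 := E_pos hκ hE
  have hRE : 0 < RR κ - E := by linarith [hE.2]
  have step : ∀ q, Real.cos (chn κ E (q + 1)) ≤ Real.cos (chn κ E q) - (RR κ - E) := by
    intro q
    set u := chn κ E q with hu
    have hupos := chn_pos hκ hE q
    have huh : u < hh κ := hc q
    have hd := denom_pos hκ hE q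
    have hdpos : 0 < Real.cos (cc κ - u) := lt_trans hE0 hd
    have hd1 : Real.cos (cc κ - u) ≤ 1 := Real.cos_le_one _
    -- product lower bound
    have hsin1 : 0 ≤ Real.sin u := Real.sin_nonneg_of_nonneg_of_le_pi hupos.le
      (by linarith [h_lt_pi_div_two hκ, pi_pos])
    have hsin2 : 0 ≤ Real.sin (cc κ - u) := Real.sin_nonneg_of_nonneg_of_le_pi
      (by linarith [h_lt_c hκ]) (by linarith [c_le_pi hκ])
    have hprod : Real.cos (cc κ) ≤ Real.cos u * Real.cos (cc κ - u) := by
      have hadd : Real.cos (cc κ) = Real.cos (u + (cc κ - u)) := by ring_nf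
      rw [hadd, Real.cos_add]
      nlinarith
    have hval : Real.cos (chn κ E (q + 1)) = E / Real.cos (cc κ - u) := by
      have := chainEq hκ hE q
      rw [← hu] at this
      field_simp at this ⊢
      linarith
    rw [hval, div_le_iff₀ hdpos]
    have hR : RR κ = Real.cos (cc κ) := rfl
    nlinarith
  have bound : ∀ q : ℕ, Real.cos (chn κ E q) ≤ 1 - q * (RR κ - E) := by
    intro q
    induction q with
    | zero => simpa using Real.cos_le_one (chn κ E 0)
    | succ q ih =>
      have := step q
      push_cast
      nlinarith
  obtain ⟨q, hq⟩ := exists_nat_gt ((1 - Real.cos (hh κ)) / (RR κ - E))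
  have h1 : Real.cos (hh κ) < Real.cos (chn κ E q) :=
    Real.cos_lt_cos_of_nonneg_of_le_pi (chn_pos hκ hE q).le
    (by linarith [h_lt_pi_div_two hκ, pi_pos]) (hc q)
  have h2 := bound q
  rw [div_lt_iff₀ hRE] at hq
  nlinarith

lemma chain_anti (hκ : 6 ≤ κ) {E₁ E₂ : ℝ} (hE1 : E₁ ∈ Ioo (LL κ) (RR κ))
    (hE2 : E₂ ∈ Ioo (LL κ) (RR κ)) (h12 : E₁ < E₂) {n : ℕ}
    (hsafe : ∀ q < n, chn κ E₁ q ≤ cc κ) :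
    ∀ q ≤ n, chn κ E₂ q < chn κ E₁ q := by
  have hE01 := E_pos hκ hE1
  have hcosc := cosc_pos hκ
  intro q
  induction q with
  | zero =>
    intro _
    rw [chn_zero, chn_zero]
    apply arccos_lt_arccos''
    · have := div_nonneg hE01.le hcosc.le; linarith
    · gcongr
    · exact ((div_lt_one hcosc).2 hE2.2).le
  | succ q ih =>
    intro hq1
    have hqn : q ≤ n := by omega
    have ihq := ih hqn
    have hu1 : chn κ E₁ q ≤ cc κ := hsafe q (by omega)
    have hd1 := denom_pos hκ hE1 q
    have hd2 := denom_pos hκ hE2 q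
    have hd1pos : 0 < Real.cos (cc κ - chn κ E₁ q) := lt_trans hE01 hd1
    have hd2pos : 0 < Real.cos (cc κ - chn κ E₂ q) := lt_trans (E_pos hκ hE2) hd2
    have hdd : Real.cos (cc κ - chn κ E₂ q) < Real.cos (cc κ - chn κ E₁ q) := by
      apply Real.cos_lt_cos_of_nonneg_of_le_pi (by linarith)
      · have := chn_pos hκ hE2 q; linarith [c_le_pi hκ]
      · linarith
    rw [chn_succ, chn_succ]
    apply arccos_lt_arccos''
    · have := div_nonneg hE01.le hd1pos.le; linarith
    · calc E₁ / Real.cos (cc κ - chn κ E₁ q)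
          < E₂ / Real.cos (cc κ - chn κ E₁ q) := by gcongr
        _ < E₂ / Real.cos (cc κ - chn κ E₂ q) := by
            gcongr
            exact E_pos hκ hE2
    · exact (chn_ratio_lt_one hκ hE2 q).le

end Inv

section Cont
variable {κ : ℕ}

lemma chn_contAt (hκ : 6 ≤ κ) (q : ℕ) {E₀ : ℝ}
    (hden : ∀ r, r < q → Real.cos (cc κ - chn κ E₀ r) ≠ 0) :
    ContinuousAt (fun E => chn κ E q) E₀ := by
  induction q with
  | zero =>
    exact Real.continuous_arccos.continuousAt.comp
      ((continuous_id.div_const (Real.cos (cc κ))).continuousAt)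
  | succ q ih =>
    have ih' := ih (fun r hr => hden r (by omega))
    have hcont : ContinuousAt (fun E => E / Real.cos (cc κ - chn κ E q)) E₀ := by
      apply ContinuousAt.div continuousAt_id
      · exact (Real.continuous_cos.continuousAt.comp
          (continuousAt_const.sub ih'))
      · exact hden q (by omega)
    exact Real.continuous_arccos.continuousAt.comp hcont

lemma chn_R (hκ : 6 ≤ κ) : ∀ q, chn κ (RR κ) q = 0 := by
  intro q
  have hcosc := cosc_pos hκ
  induction q with
  | zero =>
    rw [chn_zero, RR, div_self (by positivity), Real.arccos_one]
  | succ q ih =>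
    rw [chn_succ, ih, sub_zero, RR, div_self (by positivity), Real.arccos_one]

lemma chn_L0 (hκ : 6 ≤ κ) : chn κ (LL κ) 0 = hh κ := by
  have hcosc := cosc_pos hκ
  rw [chn_zero, LL]
  rw [mul_div_assoc, div_self (by positivity), mul_one]
  exact Real.arccos_cos (h_pos hκ).le (by linarith [h_lt_pi_div_two hκ, pi_pos])

lemma chn_L1 (hκ : 6 ≤ κ) : chn κ (LL κ) 1 = cc κ := by
  have hcosh := cosh_pos hκ
  rw [chn_succ, chn_L0 hκ, c_sub_h hκ, LL]
  rw [mul_comm, mul_div_assoc, div_self (by positivity), mul_one]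
  exact Real.arccos_cos (c_pos hκ).le (c_le_pi hκ)

end Cont

section Build
variable {κ : ℕ}

def bundle (κ n : ℕ) (σ : ℝ) : Prop :=
  σ ∈ Ioo (LL κ) (RR κ) ∧ chn κ σ n = hh κ ∧ (∀ q < n, chn κ σ q < hh κ) ∧
  (∀ E ∈ Ioo (LL κ) (RR κ), σ < E → ∀ q ≤ n, chn κ E q < hh κ)

lemma contAt_mem (hκ : 6 ≤ κ) {E₁ : ℝ} (hE₁ : E₁ ∈ Ioo (LL κ) (RR κ)) (q : ℕ) :
    ContinuousAt (fun E => chn κ E q) E₁ := by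
  apply chn_contAt hκ
  intro r _
  exact ne_of_gt (lt_trans (E_pos hκ hE₁) (denom_pos hκ hE₁ r))

lemma contAt_R (hκ : 6 ≤ κ) (q : ℕ) : ContinuousAt (fun E => chn κ E q) (RR κ) := by
  apply chn_contAt hκ
  intro r _
  rw [chn_R hκ r, sub_zero]
  exact ne_of_gt (cosc_pos hκ)

lemma buildStep (hκ : 6 ≤ κ) (n : ℕ) {E₀ : ℝ} (hE₀ : E₀ ∈ Ioo (LL κ) (RR κ))
    (hgt : hh κ < chn κ E₀ n)
    (hprev : ∀ E ∈ Ioo (LL κ) (RR κ), E₀ < E → ∀ q < n, chn κ E q < hh κ) :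
    ∃ σ, bundle κ n σ := by
  have hLR := L_lt_R hκ
  -- choose R'
  have hRt : Tendsto (fun E => chn κ E n) (𝓝 (RR κ)) (𝓝 0) := by
    have := (contAt_R hκ n).tendsto
    rwa [chn_R hκ n] at this
  have hev1 : ∀ᶠ E in 𝓝 (RR κ), chn κ E n < hh κ :=
    hRt.eventually_lt_const (h_pos hκ)
  have hev2 : ∀ᶠ E in 𝓝 (RR κ), E₀ < E := Ioi_mem_nhds hE₀.2
  have hev3 : ∀ᶠ E in 𝓝 (RR κ), LL κ < E := Ioi_mem_nhds hLR
  have hevR : ∀ᶠ E in 𝓝[<] (RR κ), chn κ E n < hh κ ∧ E₀ < E ∧ LL κ < E ∧ E < RR κ := by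
    have h4 : ∀ᶠ E in 𝓝[<] (RR κ), E < RR κ := eventually_mem_nhdsWithin
    exact (((hev1.and (hev2.and hev3)).filter_mono nhdsWithin_le_nhds).and h4).mono
      (fun E hE => ⟨hE.1.1, hE.1.2.1, hE.1.2.2, hE.2⟩)
  obtain ⟨R', hR'1, hR'2, hR'3, hR'4⟩ := hevR.exists
  have hR'Ioo : R' ∈ Ioo (LL κ) (RR κ) := ⟨hR'3, hR'4⟩
  -- the set S
  set S : Set ℝ := {E : ℝ | E ∈ Icc E₀ R' ∧ hh κ ≤ chn κ E n} with hS
  have hSne : S.Nonempty := ⟨E₀, ⟨le_refl _, hR'2.le⟩, hgt.le⟩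
  have hSbdd : BddAbove S := ⟨R', fun E hE => hE.1.2⟩
  set σ := sSup S with hσdef
  have hσ1 : E₀ ≤ σ := le_csSup hSbdd ⟨⟨le_refl _, hR'2.le⟩, hgt.le⟩
  have hσ2 : σ ≤ R' := csSup_le hSne (fun E hE => hE.1.2)
  have hσIoo : σ ∈ Ioo (LL κ) (RR κ) := ⟨lt_of_lt_of_le hE₀.1 hσ1, lt_of_le_of_lt hσ2 hR'4⟩
  have hcl : σ ∈ closure S := csSup_mem_closure hSne hSbdd
  have hneS : (𝓝[S] σ).NeBot := mem_closure_iff_nhdsWithin_neBot.1 hcl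
  have hcont : ContinuousAt (fun E => chn κ E n) σ := contAt_mem hκ hσIoo n
  have hge : hh κ ≤ chn κ σ n := by
    refine ge_of_tendsto (hcont.continuousWithinAt (s := S)) ?_
    exact eventually_mem_nhdsWithin.mono (fun E hE => hE.2)
  have hσR' : σ < R' := lt_of_le_of_ne hσ2 (by intro h; rw [h] at hge; exact absurd hge (not_le.2 hR'1))
  -- everything right of σ is below hh at step n
  have hright : ∀ E, σ < E → E < RR κ → chn κ E n < hh κ := by
    intro E hσE hER
    rcases le_or_gt E R' with hle | hlt
    · by_contra hc
      push_neg at hc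
      have hmem : E ∈ S := ⟨⟨hσ1.trans hσE.le, hle⟩, hc⟩
      exact absurd (le_csSup hSbdd hmem) (not_le.2 hσE)
    · have hEIoo : E ∈ Ioo (LL κ) (RR κ) := ⟨lt_trans hR'3 hlt, hER⟩
      have hsafe : ∀ q < n, chn κ R' q ≤ cc κ := by
        intro q hq
        have := hprev R' hR'Ioo hR'2 q hq
        linarith [h_lt_c hκ]
      have := chain_anti hκ hR'Ioo hEIoo hlt hsafe n (le_refl n)
      linarith
  have hle : chn κ σ n ≤ hh κ := by
    have hclI : σ ∈ closure (Ioo σ R') := by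
      rw [closure_Ioo (ne_of_lt hσR')]
      exact ⟨le_refl _, hσR'.le⟩
    have hneI : (𝓝[Ioo σ R'] σ).NeBot := mem_closure_iff_nhdsWithin_neBot.1 hclI
    refine le_of_tendsto (hcont.continuousWithinAt (s := Ioo σ R')) ?_
    refine eventually_mem_nhdsWithin.mono (fun E hE => ?_)
    exact (hright E hE.1 (lt_trans hE.2 hR'4)).le
  have hEq : chn κ σ n = hh κ := le_antisymm hle hge
  -- σ is strictly above E₀
  have hσgt : E₀ < σ := by
    have hc0 : ContinuousAt (fun E => chn κ E n) E₀ := contAt_mem hκ hE₀ n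
    have hev : ∀ᶠ E in 𝓝 E₀, hh κ < chn κ E n := hc0.tendsto.eventually_const_lt hgt
    have hev' : ∀ᶠ E in 𝓝 E₀, E < R' := Iio_mem_nhds hR'2
    have hev'' : ∀ᶠ E in 𝓝[>] E₀, hh κ < chn κ E n ∧ E < R' ∧ E₀ < E := by
      have h4 : ∀ᶠ E in 𝓝[>] E₀, E₀ < E := eventually_mem_nhdsWithin
      exact (((hev.and hev').filter_mono nhdsWithin_le_nhds).and h4).mono
        (fun E hE => ⟨hE.1.1, hE.1.2, hE.2⟩)
    obtain ⟨E', hE'1, hE'2, hE'3⟩ := hev''.exists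
    have : E' ∈ S := ⟨⟨hE'3.le, hE'2.le⟩, hE'1.le⟩
    exact lt_of_lt_of_le hE'3 (le_csSup hSbdd this)
  refine ⟨σ, hσIoo, hEq, ?_, ?_⟩
  · intro q hq
    exact hprev σ hσIoo hσgt q hq
  · intro E hEIoo hσE q hq
    rcases lt_or_eq_of_le hq with hlt | rfl
    · exact hprev E hEIoo (lt_trans hσgt hσE) q hlt
    · exact hright E hσE hEIoo.2

lemma contAt_L (hκ : 6 ≤ κ) : ContinuousAt (fun E => chn κ E 1) (LL κ) := by
  apply chn_contAt hκ
  intro r hr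
  interval_cases r
  rw [chn_L0 hκ, c_sub_h hκ]
  exact ne_of_gt (cosh_pos hκ)

lemma base_exists (hκ : 6 ≤ κ) : ∃ E₀ ∈ Ioo (LL κ) (RR κ), hh κ < chn κ E₀ 1 := by
  have hLR := L_lt_R hκ
  have hc : ContinuousAt (fun E => chn κ E 1) (LL κ) := contAt_L hκ
  have hval : chn κ (LL κ) 1 = cc κ := chn_L1 hκ
  have hev : ∀ᶠ E in 𝓝 (LL κ), hh κ < chn κ E 1 := by
    have := hc.tendsto
    rw [hval] at this
    exact this.eventually_const_lt (h_lt_c hκ)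
  have hev2 : ∀ᶠ E in 𝓝 (LL κ), E < RR κ := Iio_mem_nhds hLR
  have hev3 : ∀ᶠ E in 𝓝[>] (LL κ), (hh κ < chn κ E 1 ∧ E < RR κ) ∧ LL κ < E :=
    ((hev.and hev2).filter_mono nhdsWithin_le_nhds).and eventually_mem_nhdsWithin
  obtain ⟨E₀, ⟨h1, h2⟩, h3⟩ := hev3.exists
  exact ⟨E₀, ⟨h3, h2⟩, h1⟩

lemma bundle_lt (hκ : 6 ≤ κ) {m n : ℕ} {σ τ : ℝ} (hb1 : bundle κ m σ) (hb2 : bundle κ n τ)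
    (hmn : m < n) : σ < τ := by
  rcases lt_trichotomy σ τ with h | h | h
  · exact h
  · exfalso
    have := hb2.2.2.1 m hmn
    rw [← h] at this
    rw [hb1.2.1] at this
    exact lt_irrefl _ this
  · exfalso
    have := hb2.2.2.2 σ hb1.1 h m (le_of_lt hmn)
    rw [hb1.2.1] at this
    exact lt_irrefl _ this

lemma exists_bundle (hκ : 6 ≤ κ) : ∀ n, 1 ≤ n → ∃ σ, bundle κ n σ := by
  intro n hn
  induction n with
  | zero => omega
  | succ n ih =>
    rcases Nat.eq_or_lt_of_le hn with h1 | h2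
    · -- n + 1 = 1
      have hn0 : n = 0 := by omega
      subst hn0
      obtain ⟨E₀, hE₀, hgt⟩ := base_exists hκ
      exact buildStep hκ 1 hE₀ hgt (fun E hE _ q hq => by
        interval_cases q
        exact u0_lt_h hκ hE)
    · have hn1 : 1 ≤ n := by omega
      obtain ⟨σ, hb⟩ := ih hn1
      have hgt : hh κ < chn κ σ (n + 1) := Fh_gt hκ hb.1 hb.2.1
      exact buildStep hκ (n + 1) hb.1 hgt
        (fun E hE hlt q hq => hb.2.2.2 E hE hlt q (by omega))

lemma W_at_sigma (hκ : 6 ≤ κ) {n : ℕ} (hn : 1 ≤ n) {σ : ℝ} (hb : bundle κ n σ) :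
    Real.cos (cc κ - chn κ σ (n - 1)) ^ 2 - σ < 0 := by
  have hq := chainEq hκ hb.1 (n - 1)
  rw [(by omega : n - 1 + 1 = n), hb.2.1] at hq
  have hσ0 := E_pos hκ hb.1
  have hch := cosh_pos hκ
  have hcs := R_lt_cossq hκ
  nlinarith [hb.1.2, sq_nonneg (Real.cos (cc κ - chn κ σ (n - 1)))]

lemma eps_exists (hκ : 6 ≤ κ) (n : ℕ) (hn : 1 ≤ n) {a σ : ℝ}
    (hb : bundle κ n σ) (haI : a ∈ Ioo (LL κ) (RR κ)) (haσ : a < σ)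
    (hWa : 0 < Real.cos (cc κ - chn κ a (n - 1)) ^ 2 - a)
    (hsafeR : ∀ E ∈ Ioo (LL κ) (RR κ), a < E → ∀ q < n, chn κ E q < hh κ) :
    ∃ ε, a < ε ∧ ε < σ ∧ ε ∈ Ioo (LL κ) (RR κ) ∧ (∀ q < n, chn κ ε q < hh κ) ∧
      Real.cos (cc κ - chn κ ε (n - 1)) ^ 2 = ε := by
  set f : ℝ → ℝ := fun E => Real.cos (cc κ - chn κ E (n - 1)) ^ 2 - E with hf
  have hcontf : ContinuousOn f (Icc a σ) := by
    intro E hE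
    have hEI : E ∈ Ioo (LL κ) (RR κ) := ⟨lt_of_lt_of_le haI.1 hE.1, lt_of_le_of_lt hE.2 hb.1.2⟩
    have : ContinuousAt f E := by
      apply ContinuousAt.sub _ continuousAt_id
      apply ContinuousAt.pow
      exact Real.continuous_cos.continuousAt.comp
        (continuousAt_const.sub (contAt_mem hκ hEI (n-1)))
    exact this.continuousWithinAt
  have hWσ : f σ < 0 := W_at_sigma hκ hn hb
  have h0 : (0:ℝ) ∈ Ioo (f σ) (f a) := ⟨hWσ, hWa⟩
  have := intermediate_value_Ioo' (le_of_lt haσ) hcontf h0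
  obtain ⟨ε, hεI, hεf⟩ := this
  refine ⟨ε, hεI.1, hεI.2, ⟨lt_trans haI.1 hεI.1, lt_trans hεI.2 hb.1.2⟩, ?_, ?_⟩
  · exact hsafeR ε ⟨lt_trans haI.1 hεI.1, lt_trans hεI.2 hb.1.2⟩ hεI.1
  · have : f ε = 0 := hεf
    rw [hf] at this
    simp only at this
    linarith

lemma eps1_left (hκ : 6 ≤ κ) {σ : ℝ} (hb : bundle κ 1 σ) :
    ∃ a, a ∈ Ioo (LL κ) (RR κ) ∧ a < σ ∧
      0 < Real.cos (cc κ - chn κ a 0) ^ 2 - a := by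
  have hLR := L_lt_R hκ
  have hLσ : LL κ < σ := hb.1.1
  have hcont : ContinuousAt (fun E => Real.cos (cc κ - chn κ E 0) ^ 2 - E) (LL κ) := by
    apply ContinuousAt.sub _ continuousAt_id
    apply ContinuousAt.pow
    refine Real.continuous_cos.continuousAt.comp (continuousAt_const.sub ?_)
    exact chn_contAt hκ 0 (fun r hr => by omega)
  have hval : Real.cos (cc κ - chn κ (LL κ) 0) ^ 2 - LL κ > 0 := by
    rw [chn_L0 hκ, c_sub_h hκ]
    have := R_lt_cossq hκ
    have := L_lt_R hκ
    linarith
  have hev : ∀ᶠ E in 𝓝 (LL κ), 0 < Real.cos (cc κ - chn κ E 0) ^ 2 - E :=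
    hcont.tendsto.eventually_const_lt hval
  have hev2 : ∀ᶠ E in 𝓝 (LL κ), E < σ := Iio_mem_nhds hLσ
  have hev3 : ∀ᶠ E in 𝓝[>] (LL κ), ((0 < Real.cos (cc κ - chn κ E 0) ^ 2 - E) ∧ E < σ) ∧
      LL κ < E :=
    ((hev.and hev2).filter_mono nhdsWithin_le_nhds).and eventually_mem_nhdsWithin
  obtain ⟨a, ⟨h1, h2⟩, h3⟩ := hev3.exists
  exact ⟨a, ⟨h3, lt_trans h2 hb.1.2⟩, h2, h1⟩

end Build

section Repr
variable {κ : ℕ}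

lemma sin_reflect (hκ : 6 ≤ κ) (j : ℕ) (t : ℝ) :
    Real.sin (((j * κ : ℕ) : ℝ) * (cc κ - t)) = -Real.sin (((j * κ : ℕ) : ℝ) * t) := by
  have hκ0 : (κ:ℝ) ≠ 0 := ne_of_gt (kpos hκ)
  have h1 : ((j * κ : ℕ) : ℝ) * (cc κ - t) = (j:ℝ) * (2 * π) - ((j * κ : ℕ) : ℝ) * t := by
    push_cast
    rw [cc]
    field_simp
  rw [h1, Real.sin_sub]
  rw [Real.cos_nat_mul_two_pi j]
  have hs : Real.sin ((j:ℝ) * (2 * π)) = 0 := by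
    have : (j:ℝ) * (2 * π) = ((2 * j : ℕ) : ℝ) * π := by push_cast; ring
    rw [this, Real.sin_nat_mul_pi]
  rw [hs]
  ring

lemma sin_j_h (hκ : 6 ≤ κ) (j : ℕ) : Real.sin (((j * κ : ℕ) : ℝ) * hh κ) = 0 := by
  have hκ0 : (κ:ℝ) ≠ 0 := ne_of_gt (kpos hκ)
  have h1 : ((j * κ : ℕ) : ℝ) * hh κ = (j:ℝ) * π := by
    push_cast; rw [hh]; field_simp
  rw [h1]
  exact_mod_cast Real.sin_nat_mul_pi j

lemma sin_j_c (hκ : 6 ≤ κ) (j : ℕ) : Real.sin (((j * κ : ℕ) : ℝ) * cc κ) = 0 := by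
  have h := sin_reflect hκ j 0
  simp only [sub_zero, mul_zero, Real.sin_zero, neg_zero] at h
  exact h

/-- telescoping sum -/
lemma tele (ν Sp Tp s : ℕ → ℝ) : ∀ n : ℕ, 1 ≤ n →
    (∀ q, q + 1 < n → ν (q + 1) * Sp (q + 1) = ν q * Tp q) →
    ∑ q ∈ Finset.range n, ν q * (Sp q * s q - Tp q * s (q + 1))
      = ν 0 * Sp 0 * s 0 - ν (n - 1) * Tp (n - 1) * s n := by
  intro n
  induction n with
  | zero => omega
  | succ n ih =>
    intro _ hrec
    rcases Nat.eq_or_lt_of_le (Nat.one_le_iff_ne_zero.2 (Nat.succ_ne_zero n)) with h1 | h2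
    · have hn0 : n = 0 := by omega
      subst hn0
      simp [Finset.sum_range_one]
      ring
    · have hn1 : 1 ≤ n := by omega
      rw [Finset.sum_range_succ, ih hn1 (fun q hq => hrec q (by omega))]
      have hr := hrec (n - 1) (by omega)
      rw [(by omega : n - 1 + 1 = n)] at hr
      have hnn : n + 1 - 1 = n := by omega
      rw [hnn]
      linear_combination (s n) * hr

noncomputable def nuAux (Sp Tp : ℕ → ℝ) (c0 : ℝ) : ℕ → ℝ
  | 0 => c0 / Sp 0
  | q + 1 => nuAux Sp Tp c0 q * Tp q / Sp (q + 1)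

lemma nuAux_zero_mul (Sp Tp : ℕ → ℝ) (c0 : ℝ) (h0 : Sp 0 ≠ 0) :
    nuAux Sp Tp c0 0 * Sp 0 = c0 := by
  show c0 / Sp 0 * Sp 0 = c0
  field_simp

lemma nuAux_succ_mul (Sp Tp : ℕ → ℝ) (c0 : ℝ) (q : ℕ) (h0 : Sp (q + 1) ≠ 0) :
    nuAux Sp Tp c0 (q + 1) * Sp (q + 1) = nuAux Sp Tp c0 q * Tp q := by
  show nuAux Sp Tp c0 q * Tp q / Sp (q + 1) * Sp (q + 1) = _
  field_simp

section Common
variable {E : ℝ}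

lemma cos_chn_pos (hκ6 : 6 ≤ κ) (hE : E ∈ Ioo (LL κ) (RR κ)) (q : ℕ) :
    0 < Real.cos (chn κ E q) :=
  Real.cos_pos_of_mem_Ioo ⟨by linarith [chn_pos hκ6 hE q, pi_pos], chn_lt_half_pi hκ6 hE q⟩

lemma cos_csub_pos (hκ6 : 6 ≤ κ) (hE : E ∈ Ioo (LL κ) (RR κ)) (q : ℕ) :
    0 < Real.cos (cc κ - chn κ E q) :=
  lt_trans (E_pos hκ6 hE) (denom_pos hκ6 hE q)

lemma sin_chn_pos (hκ6 : 6 ≤ κ) (hE : E ∈ Ioo (LL κ) (RR κ)) (q : ℕ) :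
    0 < Real.sin (chn κ E q) :=
  Real.sin_pos_of_pos_of_lt_pi (chn_pos hκ6 hE q)
    (by linarith [chn_lt_half_pi hκ6 hE q, pi_pos])

lemma sin_csub_pos (hκ6 : 6 ≤ κ) (hE : E ∈ Ioo (LL κ) (RR κ)) {q : ℕ}
    (hq : chn κ E q < hh κ) : 0 < Real.sin (cc κ - chn κ E q) := by
  apply Real.sin_pos_of_pos_of_lt_pi
  · linarith [h_lt_c hκ6]
  · have := chn_pos hκ6 hE q
    have := c_le hκ6
    have := pi_pos
    linarith

end Common

lemma nuAux_succ_def (Sp Tp : ℕ → ℝ) (c0 : ℝ) (q : ℕ) :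
    nuAux Sp Tp c0 (q + 1) = nuAux Sp Tp c0 q * Tp q / Sp (q + 1) := rfl

/-- Representation lemma, family A : the chain hits `hh κ` exactly at step `m+1`. -/
lemma reprA (hκ6 : 6 ≤ κ) {E : ℝ} (hE : E ∈ Ioo (LL κ) (RR κ)) (m : ℕ)
    (hsafe : ∀ q < m + 1, chn κ E q < hh κ)
    (hclose : chn κ E (m + 1) = hh κ) :
    Theta2 (m + 1) κ E := by
  have hκ1 : 1 ≤ κ := by omega
  have hE0 := E_pos hκ6 hE
  set Sp : ℕ → ℝ := fun q => Real.cos (chn κ E (q + 1)) * Real.sin (cc κ - chn κ E q) with hSp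
  set Tp : ℕ → ℝ := fun q => Real.cos (cc κ - chn κ E q) * Real.sin (chn κ E (q + 1)) with hTp
  have hSppos : ∀ q < m + 1, 0 < Sp q := fun q hq =>
    mul_pos (cos_chn_pos hκ6 hE (q + 1)) (sin_csub_pos hκ6 hE (hsafe q hq))
  have hTppos : ∀ q, 0 < Tp q := fun q =>
    mul_pos (cos_csub_pos hκ6 hE q) (sin_chn_pos hκ6 hE (q + 1))
  set c0 : ℝ := Real.cos (cc κ) * Real.sin (chn κ E 0) with hc0
  have hc0pos : 0 < c0 := mul_pos (cosc_pos hκ6) (sin_chn_pos hκ6 hE 0)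
  set ν : ℕ → ℝ := nuAux Sp Tp c0 with hν
  have hν0 : ν 0 * Sp 0 = c0 := nuAux_zero_mul Sp Tp c0 (ne_of_gt (hSppos 0 (by omega)))
  have hνrec : ∀ q, q + 1 < m + 1 → ν (q + 1) * Sp (q + 1) = ν q * Tp q := fun q hq =>
    nuAux_succ_mul Sp Tp c0 q (ne_of_gt (hSppos (q + 1) hq))
  have hνnonneg : ∀ q < m + 1, 0 ≤ ν q := by
    intro q
    induction q with
    | zero => intro _; exact le_of_lt (div_pos hc0pos (hSppos 0 (by omega)))
    | succ q ih =>
      intro hq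
      have h1 := ih (by omega)
      rw [hν, nuAux_succ_def, ← hν]
      exact div_nonneg (mul_nonneg h1 (hTppos q).le) (hSppos (q + 1) hq).le
  set x : ℕ → ℝ := Function.update (fun q => Real.cos (cc κ - chn κ E q)) (m + 1)
    (Real.cos (chn κ E 0)) with hx
  have hx1 : x (m + 1) = Real.cos (chn κ E 0) := by
    rw [hx]; exact Function.update_self _ _ _
  have hx2 : ∀ q, q ≠ m + 1 → x q = Real.cos (cc κ - chn κ E q) := by
    intro q hq; rw [hx]; exact Function.update_of_ne hq _ _
  have hEdiv0 : E / Real.cos (chn κ E 0) = Real.cos (cc κ) := by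
    rw [eq_comm, eq_div_iff (ne_of_gt (cos_chn_pos hκ6 hE 0))]
    linear_combination u0Eq hκ6 hE
  have hEdiv : ∀ q : ℕ, E / Real.cos (cc κ - chn κ E q) = Real.cos (chn κ E (q + 1)) := by
    intro q
    rw [eq_comm, eq_div_iff (ne_of_gt (cos_csub_pos hκ6 hE q))]
    linear_combination chainEq hκ6 hE q
  refine ⟨x, fun q => -ν q, ?_, ?_, ?_⟩
  · intro q hq
    by_cases hqm : q = m + 1
    · subst hqm
      rw [hx1, hEdiv0]
      exact ⟨ne_of_gt (cos_chn_pos hκ6 hE 0), Real.abs_cos_le_one _, Real.abs_cos_le_one _⟩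
    · rw [hx2 q hqm, hEdiv q]
      exact ⟨ne_of_gt (cos_csub_pos hκ6 hE q), Real.abs_cos_le_one _, Real.abs_cos_le_one _⟩
  · intro q hq
    exact neg_nonpos.2 (hνnonneg q hq)
  · intro j hj
    have hLHS : g j κ E (x (m + 1))
        = c0 * Real.sin (((j * κ : ℕ) : ℝ) * chn κ E 0) := by
      rw [hx1]
      rw [g_eval hj hκ1 (chn κ E 0) (cc κ) E (ne_of_gt (cos_chn_pos hκ6 hE 0)) (u0Eq hκ6 hE)]
      rw [sin_j_c hκ6 j, hc0]
      ring
    rw [hLHS]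
    have hsummand : ∀ q ∈ Finset.range (m + 1),
        (-ν q) * g j κ E (x q)
          = ν q * (Sp q * Real.sin (((j * κ : ℕ) : ℝ) * chn κ E q)
              - Tp q * Real.sin (((j * κ : ℕ) : ℝ) * chn κ E (q + 1))) := by
      intro q hq
      have hqm : q ≠ m + 1 := by
        have := Finset.mem_range.1 hq; omega
      rw [hx2 q hqm]
      rw [g_eval hj hκ1 (cc κ - chn κ E q) (chn κ E (q + 1)) E
        (ne_of_gt (cos_csub_pos hκ6 hE q)) (chainEq hκ6 hE q)]
      rw [sin_reflect hκ6 j (chn κ E q)]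
      simp only [hSp, hTp]
      ring
    rw [Finset.sum_congr rfl hsummand]
    rw [tele ν Sp Tp (fun q => Real.sin (((j * κ : ℕ) : ℝ) * chn κ E q)) (m + 1)
      (by omega) hνrec]
    have hend : Real.sin (((j * κ : ℕ) : ℝ) * chn κ E (m + 1)) = 0 := by
      rw [hclose]
      exact sin_j_h hκ6 j
    rw [(by omega : m + 1 - 1 = m), hend, hν0]
    ring

/-- Representation lemma, family E : `cos (c - u m) ^ 2 = E`. -/
lemma reprE (hκ6 : 6 ≤ κ) {E : ℝ} (hE : E ∈ Ioo (LL κ) (RR κ)) (m : ℕ)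
    (hsafe : ∀ q < m + 1, chn κ E q < hh κ)
    (hclose : Real.cos (cc κ - chn κ E m) ^ 2 = E) :
    Theta2 (m + 1) κ E := by
  have hκ1 : 1 ≤ κ := by omega
  have hE0 := E_pos hκ6 hE
  set Sp : ℕ → ℝ := fun q => Real.cos (chn κ E (q + 1)) * Real.sin (cc κ - chn κ E q) with hSp
  set Tp : ℕ → ℝ := fun q => Real.cos (cc κ - chn κ E q) * Real.sin (chn κ E (q + 1)) with hTp
  have hSppos : ∀ q < m + 1, 0 < Sp q := fun q hq =>
    mul_pos (cos_chn_pos hκ6 hE (q + 1)) (sin_csub_pos hκ6 hE (hsafe q hq))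
  have hTppos : ∀ q, 0 < Tp q := fun q =>
    mul_pos (cos_csub_pos hκ6 hE q) (sin_chn_pos hκ6 hE (q + 1))
  set c0 : ℝ := Real.cos (cc κ) * Real.sin (chn κ E 0) with hc0
  have hc0pos : 0 < c0 := mul_pos (cosc_pos hκ6) (sin_chn_pos hκ6 hE 0)
  set ν : ℕ → ℝ := nuAux Sp Tp c0 with hν
  have hν0 : ν 0 * Sp 0 = c0 := nuAux_zero_mul Sp Tp c0 (ne_of_gt (hSppos 0 (by omega)))
  have hνrec : ∀ q, q + 1 < m + 1 → ν (q + 1) * Sp (q + 1) = ν q * Tp q := fun q hq =>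
    nuAux_succ_mul Sp Tp c0 q (ne_of_gt (hSppos (q + 1) hq))
  have hνnonneg : ∀ q < m + 1, 0 ≤ ν q := by
    intro q
    induction q with
    | zero => intro _; exact le_of_lt (div_pos hc0pos (hSppos 0 (by omega)))
    | succ q ih =>
      intro hq
      have h1 := ih (by omega)
      rw [hν, nuAux_succ_def, ← hν]
      exact div_nonneg (mul_nonneg h1 (hTppos q).le) (hSppos (q + 1) hq).le
  have hdm : 0 < Real.cos (cc κ - chn κ E m) := cos_csub_pos hκ6 hE m
  have hratio : E / Real.cos (cc κ - chn κ E m) = Real.cos (cc κ - chn κ E m) := by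
    rw [eq_comm, eq_div_iff (ne_of_gt hdm)]
    linear_combination hclose
  have huclose : chn κ E (m + 1) = cc κ - chn κ E m := by
    rw [chn_succ, hratio]
    apply Real.arccos_cos
    · have := hsafe m (by omega)
      have := h_lt_c hκ6
      linarith
    · have := chn_pos hκ6 hE m
      have := c_le_pi hκ6
      linarith
  set x : ℕ → ℝ := Function.update (fun q => Real.cos (cc κ - chn κ E q)) (m + 1)
    (Real.cos (chn κ E 0)) with hx
  set ω : ℕ → ℝ :=
    Function.update (fun q => -ν q) m (-(ν m * Sp m / (Sp m + Tp m))) with hω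
  have hx1 : x (m + 1) = Real.cos (chn κ E 0) := by
    rw [hx]; exact Function.update_self _ _ _
  have hx2 : ∀ q, q ≠ m + 1 → x q = Real.cos (cc κ - chn κ E q) := by
    intro q hq; rw [hx]; exact Function.update_of_ne hq _ _
  have hω1 : ω m = -(ν m * Sp m / (Sp m + Tp m)) := by
    rw [hω]; exact Function.update_self _ _ _
  have hω2 : ∀ q, q ≠ m → ω q = -ν q := by
    intro q hq; rw [hω]; exact Function.update_of_ne hq _ _
  have hEdiv0 : E / Real.cos (chn κ E 0) = Real.cos (cc κ) := by
    rw [eq_comm, eq_div_iff (ne_of_gt (cos_chn_pos hκ6 hE 0))]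
    linear_combination u0Eq hκ6 hE
  have hEdiv : ∀ q : ℕ, E / Real.cos (cc κ - chn κ E q) = Real.cos (chn κ E (q + 1)) := by
    intro q
    rw [eq_comm, eq_div_iff (ne_of_gt (cos_csub_pos hκ6 hE q))]
    linear_combination chainEq hκ6 hE q
  refine ⟨x, ω, ?_, ?_, ?_⟩
  · intro q hq
    by_cases hqm : q = m + 1
    · subst hqm
      rw [hx1, hEdiv0]
      exact ⟨ne_of_gt (cos_chn_pos hκ6 hE 0), Real.abs_cos_le_one _, Real.abs_cos_le_one _⟩
    · rw [hx2 q hqm, hEdiv q]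
      exact ⟨ne_of_gt (cos_csub_pos hκ6 hE q), Real.abs_cos_le_one _, Real.abs_cos_le_one _⟩
  · intro q hq
    by_cases hqm : q = m
    · rw [hqm, hω1]
      have h1 := hνnonneg m (by omega)
      have h2 := hSppos m (by omega)
      have h3 := hTppos m
      exact neg_nonpos.2 (div_nonneg (mul_nonneg h1 h2.le) (by linarith))
    · rw [hω2 q hqm]
      exact neg_nonpos.2 (hνnonneg q (by omega))
  · intro j hj
    have hLHS : g j κ E (x (m + 1))
        = c0 * Real.sin (((j * κ : ℕ) : ℝ) * chn κ E 0) := by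
      rw [hx1]
      rw [g_eval hj hκ1 (chn κ E 0) (cc κ) E (ne_of_gt (cos_chn_pos hκ6 hE 0)) (u0Eq hκ6 hE)]
      rw [sin_j_c hκ6 j, hc0]
      ring
    rw [hLHS]
    have hgq : ∀ q, q ≠ m + 1 → g j κ E (x q)
        = -(Sp q * Real.sin (((j * κ : ℕ) : ℝ) * chn κ E q))
          + Tp q * Real.sin (((j * κ : ℕ) : ℝ) * chn κ E (q + 1)) := by
      intro q hqm
      rw [hx2 q hqm]
      rw [g_eval hj hκ1 (cc κ - chn κ E q) (chn κ E (q + 1)) E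
        (ne_of_gt (cos_csub_pos hκ6 hE q)) (chainEq hκ6 hE q)]
      rw [sin_reflect hκ6 j (chn κ E q)]
      simp only [hSp, hTp]
      ring
    have hsm1 : Real.sin (((j * κ : ℕ) : ℝ) * chn κ E (m + 1))
        = -Real.sin (((j * κ : ℕ) : ℝ) * chn κ E m) := by
      rw [huclose, sin_reflect hκ6 j (chn κ E m)]
    have hSTpos : 0 < Sp m + Tp m := by
      have := hSppos m (by omega)
      have := hTppos m
      linarith
    have hlast : ω m * g j κ E (x m)
        = ν m * Sp m * Real.sin (((j * κ : ℕ) : ℝ) * chn κ E m) := by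
      rw [hω1, hgq m (by omega), hsm1]
      field_simp
      ring
    rw [Finset.sum_range_succ, hlast]
    rcases Nat.eq_zero_or_pos m with hm0 | hm1
    · subst hm0
      simp only [Finset.range_zero, Finset.sum_empty, zero_add]
      rw [hν0]
    · obtain ⟨k, rfl⟩ : ∃ k, m = k + 1 := ⟨m - 1, by omega⟩
      have hsummand : ∀ q ∈ Finset.range (k + 1),
          ω q * g j κ E (x q)
            = ν q * (Sp q * Real.sin (((j * κ : ℕ) : ℝ) * chn κ E q)
                - Tp q * Real.sin (((j * κ : ℕ) : ℝ) * chn κ E (q + 1))) := by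
        intro q hq
        have hqm : q ≠ k + 1 := by have := Finset.mem_range.1 hq; omega
        rw [hω2 q hqm, hgq q (by have := Finset.mem_range.1 hq; omega)]
        ring
      rw [Finset.sum_congr rfl hsummand]
      rw [tele ν Sp Tp (fun q => Real.sin (((j * κ : ℕ) : ℝ) * chn κ E q)) (k + 1)
        (by omega) (fun q hq => hνrec q (by omega))]
      have hr := hνrec k (by omega)
      rw [(by omega : k + 1 - 1 = k), hν0]
      linear_combination
        -Real.sin (((j * κ : ℕ) : ℝ) * chn κ E (k + 1)) * hr

lemma W_at_prev (hκ : 6 ≤ κ) {n : ℕ} {σ : ℝ} (hb : bundle κ n σ) :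
    0 < Real.cos (cc κ - chn κ σ n) ^ 2 - σ := by
  rw [hb.2.1, c_sub_h hκ]
  have := R_lt_cossq hκ
  have := hb.1.2
  linarith

lemma bundle_theta (hκ : 6 ≤ κ) {n : ℕ} {σ : ℝ} (hn : 1 ≤ n) (hb : bundle κ n σ) :
    Theta2 n κ σ := by
  obtain ⟨m, rfl⟩ : ∃ m, n = m + 1 := ⟨n - 1, by omega⟩
  exact reprA hκ hb.1 m hb.2.2.1 hb.2.1

lemma eps_theta (hκ : 6 ≤ κ) {n : ℕ} {ε : ℝ} (hn : 1 ≤ n) (hε : ε ∈ Ioo (LL κ) (RR κ))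
    (hsafe : ∀ q < n, chn κ ε q < hh κ)
    (hclose : Real.cos (cc κ - chn κ ε (n - 1)) ^ 2 = ε) :
    Theta2 n κ ε := by
  obtain ⟨m, rfl⟩ : ∃ m, n = m + 1 := ⟨n - 1, by omega⟩
  exact reprE hκ hε m hsafe (by rwa [(by omega : m + 1 - 1 = m)] at hclose)

end Repr
end IST

theorem IST.main (κ : ℕ) (hκ : 6 ≤ κ) :
    ∃ F : ℕ → ℝ,
      (∀ m n : ℕ, 1 ≤ m → m < n → F m < F n) ∧
      (∀ n : ℕ, 1 ≤ n → IST.LL κ < F n ∧ F n < IST.RR κ) ∧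
      Filter.Tendsto F Filter.atTop (nhds (IST.RR κ)) ∧
      (∀ n : ℕ, 1 ≤ n → Theta2 n κ (F (2 * n - 1)) ∧ Theta2 n κ (F (2 * n))) := by
  classical
  have hLR := IST.L_lt_R hκ
  -- the family A roots
  have hsig0 : ∀ n : ℕ, ∃ σ : ℝ, 1 ≤ n → IST.bundle κ n σ := by
    intro n
    rcases Nat.lt_or_ge n 1 with h | h
    · exact ⟨0, by omega⟩
    · obtain ⟨σ, hb⟩ := IST.exists_bundle hκ n h
      exact ⟨σ, fun _ => hb⟩
  choose Sig hSig using hsig0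
  have hSiglt : ∀ m n, 1 ≤ m → m < n → Sig m < Sig n := fun m n hm hmn =>
    IST.bundle_lt hκ (hSig m hm) (hSig n (by omega)) hmn
  -- the family E roots
  have heps0 : ∀ n : ℕ, ∃ ε : ℝ, 1 ≤ n →
      ((2 ≤ n → Sig (n - 1) < ε) ∧ ε < Sig n ∧ ε ∈ Set.Ioo (IST.LL κ) (IST.RR κ) ∧
        Theta2 n κ ε) := by
    intro n
    rcases Nat.lt_or_ge n 1 with h | h
    · exact ⟨0, by omega⟩
    rcases Nat.lt_or_ge n 2 with h2 | h2
    · -- n = 1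
      have hn1 : n = 1 := by omega
      subst hn1
      obtain ⟨a, haI, haσ, hWa⟩ := IST.eps1_left hκ (hSig 1 (by omega))
      obtain ⟨ε, haε, hεσ, hεI, hsafe, hclose⟩ :=
        IST.eps_exists hκ 1 (by omega) (hSig 1 (by omega)) haI haσ hWa
          (fun E hE _ q hq => by
            interval_cases q
            exact IST.u0_lt_h hκ hE)
      exact ⟨ε, fun _ => ⟨fun h => by omega, hεσ, hεI,
        IST.eps_theta hκ (by omega) hεI hsafe hclose⟩⟩
    · -- n ≥ 2
      have hbp := hSig (n - 1) (by omega)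
      have hb := hSig n (by omega)
      have haσ : Sig (n - 1) < Sig n := hSiglt (n - 1) n (by omega) (by omega)
      have hWa := IST.W_at_prev hκ hbp
      obtain ⟨ε, haε, hεσ, hεI, hsafe, hclose⟩ :=
        IST.eps_exists hκ n (by omega) hb hbp.1 haσ hWa
          (fun E hE hlt q hq => hbp.2.2.2 E hE hlt q (by omega))
      exact ⟨ε, fun _ => ⟨fun _ => haε, hεσ, hεI,
        IST.eps_theta hκ (by omega) hεI hsafe hclose⟩⟩
  choose Eps hEps using heps0
  -- the interlaced sequence
  set F : ℕ → ℝ := fun k =>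
    if k % 2 = 0 then (if k = 0 then IST.LL κ else Sig (k / 2)) else Eps ((k + 1) / 2)
    with hFdef
  have hF0 : F 0 = IST.LL κ := rfl
  have hFeven : ∀ n, 1 ≤ n → F (2 * n) = Sig n := by
    intro n hn
    show (if (2 * n) % 2 = 0 then (if 2 * n = 0 then IST.LL κ else Sig (2 * n / 2))
      else Eps ((2 * n + 1) / 2)) = Sig n
    rw [if_pos (by omega : (2 * n) % 2 = 0), if_neg (by omega : ¬(2 * n = 0)),
      (by omega : 2 * n / 2 = n)]
  have hFodd : ∀ n, 1 ≤ n → F (2 * n - 1) = Eps n := by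
    intro n hn
    show (if (2 * n - 1) % 2 = 0 then (if 2 * n - 1 = 0 then IST.LL κ else Sig ((2 * n - 1) / 2))
      else Eps ((2 * n - 1 + 1) / 2)) = Eps n
    rw [if_neg (by omega : ¬((2 * n - 1) % 2 = 0)), (by omega : (2 * n - 1 + 1) / 2 = n)]
  have hFIoo : ∀ k, 1 ≤ k → F k ∈ Set.Ioo (IST.LL κ) (IST.RR κ) := by
    intro k hk
    rcases Nat.even_or_odd k with ⟨n, hn⟩ | ⟨n, hn⟩
    · have hn1 : 1 ≤ n := by omega
      have : k = 2 * n := by omega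
      rw [this, hFeven n hn1]
      exact (hSig n hn1).1
    · have : k = 2 * (n + 1) - 1 := by omega
      rw [this, hFodd (n + 1) (by omega)]
      exact (hEps (n + 1) (by omega)).2.2.1
  have hmono : ∀ k, F k < F (k + 1) := by
    intro k
    rcases Nat.eq_zero_or_pos k with rfl | hk
    · have : (0 : ℕ) + 1 = 2 * 1 - 1 := by omega
      rw [hF0, this, hFodd 1 (by omega)]
      exact ((hEps 1 (by omega)).2.2.1).1
    rcases Nat.even_or_odd k with ⟨n, hn⟩ | ⟨n, hn⟩
    · -- k = 2n, next is odd
      have hn1 : 1 ≤ n := by omega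
      have h1 : k = 2 * n := by omega
      have h2 : k + 1 = 2 * (n + 1) - 1 := by omega
      rw [h2, h1, hFeven n hn1, hFodd (n + 1) (by omega)]
      exact (hEps (n + 1) (by omega)).1 (by omega)
    · -- k = 2n+1 odd, next even
      have h1 : k = 2 * (n + 1) - 1 := by omega
      have h2 : k + 1 = 2 * (n + 1) := by omega
      rw [h2, h1, hFodd (n + 1) (by omega), hFeven (n + 1) (by omega)]
      exact (hEps (n + 1) (by omega)).2.1
  have hstrict : StrictMono F := strictMono_nat_of_lt_succ hmono
  refine ⟨F, fun m n _ hmn => hstrict hmn, fun n hn => ⟨(hFIoo n hn).1, (hFIoo n hn).2⟩,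
    ?_, ?_⟩
  · -- tendsto
    rw [tendsto_order]
    constructor
    · intro a ha
      have hmax : max a (IST.LL κ) < IST.RR κ := max_lt ha hLR
      obtain ⟨E', hE'1, hE'2⟩ := exists_between hmax
      have hE'Ioo : E' ∈ Set.Ioo (IST.LL κ) (IST.RR κ) :=
        ⟨lt_of_le_of_lt (le_max_right _ _) hE'1, hE'2⟩
      have haE' : a < E' := lt_of_le_of_lt (le_max_left _ _) hE'1
      obtain ⟨q, hq⟩ := IST.escape hκ hE'Ioo
      have hSgeq : ∀ n, q ≤ n → 1 ≤ n → E' ≤ Sig n := by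
        intro n hqn hn1
        by_contra hc
        push_neg at hc
        have := (hSig n hn1).2.2.2 E' hE'Ioo hc q hqn
        linarith
      rw [Filter.eventually_atTop]
      refine ⟨2 * q + 2, fun k hk => ?_⟩
      rcases Nat.even_or_odd k with ⟨n, hn⟩ | ⟨n, hn⟩
      · have hn1 : 1 ≤ n := by omega
        have h1 : k = 2 * n := by omega
        rw [h1, hFeven n hn1]
        have : E' ≤ Sig n := hSgeq n (by omega) hn1
        linarith
      · have h1 : k = 2 * (n + 1) - 1 := by omega
        rw [h1, hFodd (n + 1) (by omega)]
        have hgt : Sig n < Eps (n + 1) := (hEps (n + 1) (by omega)).1 (by omega)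
        have : E' ≤ Sig n := hSgeq n (by omega) (by omega)
        linarith
    · intro a ha
      rw [Filter.eventually_atTop]
      exact ⟨1, fun k hk => lt_trans (hFIoo k hk).2 ha⟩
  · intro n hn
    constructor
    · rw [hFodd n hn]
      exact (hEps n hn).2.2.2
    · rw [hFeven n hn]
      exact IST.bundle_theta hκ hn (hSig n hn)


/-- There is a strictly increasing sequence of thresholds in
`(cos(π/κ)·cos(2π/κ), cos(2π/κ))` converging to `cos(2π/κ)`, with
`F_{2n-1}, F_{2n} ∈ 𝚯_{n,κ}`. -/
theorem increasing_sequence_of_thresholds (κ : ℕ) (hκ : 6 ≤ κ) (hke : Even κ) :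
    ∃ F : ℕ → ℝ,
      (∀ m n : ℕ, 1 ≤ m → m < n → F m < F n) ∧
      (∀ n : ℕ, 1 ≤ n →
        Real.cos (π / κ) * Real.cos (2 * π / κ) < F n ∧ F n < Real.cos (2 * π / κ)) ∧
      Tendsto F atTop (nhds (Real.cos (2 * π / κ))) ∧
      (∀ n : ℕ, 1 ≤ n → Theta2 n κ (F (2 * n - 1)) ∧ Theta2 n κ (F (2 * n))) := by
  obtain ⟨F, h1, h2, h3, h4⟩ := IST.main κ hκ
  exact ⟨F, h1, h2, h3, h4⟩
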